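/- arXiv:1911.04404 — 4 statements merged into one kernel-verified Lean document; each statement's English description precedes it below -/
import Mathlib

section
/- Let L : ℕ → ℕ be given by L(j) = 2^j − 1. For any finite nonempty set J ⊆ ℕ with maximum n, there do not exist natural numbers k_j (j ∈ J) such that Σ_{j∈J} k_j · (2^j − 1) = 2^{n+1} − 1 and Σ_{j∈J} k_j · (2^{j+m} − 1) = 2^{n+m+1} − 1 for some fixed m ≥ 1. -/
theorem stmt_6 (J : Finset ℕ) (hJ : J.Nonempty) (n : ℕ) (hn : J.max' hJ = n)
    (m : ℕ) (hm : 1 ≤ m) :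
    ¬ ∃ k : ℕ → ℕ,
        (∑ j ∈ J, k j * (2 ^ j - 1) = 2 ^ (n + 1) - 1) ∧
        (∑ j ∈ J, k j * (2 ^ (j + m) - 1) = 2 ^ (n + m + 1) - 1) := by
  rintro ⟨k, h1, h2⟩
  set S := ∑ j ∈ J, k j with hS
  have e1 : ∑ j ∈ J, k j * 2 ^ j = 2 ^ (n + 1) - 1 + S := by
    rw [← h1, hS, ← Finset.sum_add_distrib]
    refine Finset.sum_congr rfl fun j _ => ?_
    rw [← Nat.mul_succ, Nat.succ_eq_add_one, Nat.sub_add_cancel Nat.one_le_two_pow]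
  have e2 : ∑ j ∈ J, k j * 2 ^ (j + m) = 2 ^ (n + m + 1) - 1 + S := by
    rw [← h2, hS, ← Finset.sum_add_distrib]
    refine Finset.sum_congr rfl fun j _ => ?_
    rw [← Nat.mul_succ, Nat.succ_eq_add_one, Nat.sub_add_cancel Nat.one_le_two_pow]
  have e3 : ∑ j ∈ J, k j * 2 ^ (j + m) = 2 ^ m * ∑ j ∈ J, k j * 2 ^ j := by
    rw [Finset.mul_sum]
    refine Finset.sum_congr rfl fun j _ => ?_
    rw [pow_add]; ring
  have key : 2 ^ m * (2 ^ (n + 1) - 1 + S) = 2 ^ (n + m + 1) - 1 + S := by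
    rw [← e1, ← e3, e2]
  have a1 : (1 : ℕ) ≤ 2 ^ (n + 1) := Nat.one_le_two_pow
  have a2 : (1 : ℕ) ≤ 2 ^ (n + m + 1) := Nat.one_le_two_pow
  zify [a1, a2] at key
  have hp : (2 : ℤ) ^ (n + m + 1) = 2 ^ (n + 1) * 2 ^ m := by ring
  have hSm : ((2 : ℤ) ^ m - 1) * ((S : ℤ) - 1) = 0 := by linear_combination key + hp
  have hm2 : (2 : ℤ) ^ m - 1 ≠ 0 := by
    have : (2 : ℤ) ^ 1 ≤ 2 ^ m := pow_le_pow_right₀ (by norm_num) hm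
    simp at this; omega
  have hS1 : S = 1 := by
    rcases mul_eq_zero.mp hSm with h | h
    · exact absurd h hm2
    · exact_mod_cast sub_eq_zero.mp h
  have eA : ∑ j ∈ J, k j * 2 ^ j = 2 ^ (n + 1) := by
    rw [e1, hS1, Nat.sub_add_cancel a1]
  have hb : ∑ j ∈ J, k j * 2 ^ j ≤ 2 ^ n := by
    calc ∑ j ∈ J, k j * 2 ^ j ≤ ∑ j ∈ J, k j * 2 ^ n := by
          refine Finset.sum_le_sum fun j hj => ?_
          exact Nat.mul_le_mul_left _ (Nat.pow_le_pow_right (by norm_num)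
            (hn ▸ J.le_max' j hj))
      _ = S * 2 ^ n := by rw [hS, Finset.sum_mul]
      _ = 2 ^ n := by rw [hS1, one_mul]
  rw [eA] at hb
  have : 2 ^ n < 2 ^ (n + 1) := Nat.pow_lt_pow_right (by norm_num) (by omega)
  omega
end

section
/- For every n ∈ ℕ, the vector (2^{n+1} − 1, 2^{n+2} − 1) ∈ ℕ² is not an ℕ-linear combination of the vectors (2^j − 1, 2^{j+1} − 1) for 0 ≤ j ≤ n. -/
theorem stmt_9 (n : ℕ) :
    ¬ ∃ k : ℕ → ℕ,
        ((2 ^ (n + 1) - 1, 2 ^ (n + 2) - 1) : ℕ × ℕ) =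
          ∑ j ∈ Finset.range (n + 1), k j • ((2 ^ j - 1, 2 ^ (j + 1) - 1) : ℕ × ℕ) := by
  rintro ⟨k, h⟩
  have h1 : 2 ^ (n + 1) - 1 = ∑ j ∈ Finset.range (n + 1), k j * (2 ^ j - 1) := by
    have := congrArg Prod.fst h
    simpa [Prod.fst_sum, smul_eq_mul] using this
  have h2 : 2 ^ (n + 2) - 1 = ∑ j ∈ Finset.range (n + 1), k j * (2 ^ (j + 1) - 1) := by
    have := congrArg Prod.snd h
    simpa [Prod.snd_sum, smul_eq_mul] using this
  have hterm : ∀ j : ℕ, 2 ^ (j + 1) - 1 = 2 * (2 ^ j - 1) + 1 := by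
    intro j
    have h1 : 1 ≤ 2 ^ j := Nat.one_le_two_pow
    have h2 : 2 ^ (j + 1) = 2 * 2 ^ j := by ring
    omega
  have h2' : 2 ^ (n + 2) - 1 =
      2 * (∑ j ∈ Finset.range (n + 1), k j * (2 ^ j - 1)) +
        ∑ j ∈ Finset.range (n + 1), k j := by
    rw [h2, Finset.mul_sum, ← Finset.sum_add_distrib]
    refine Finset.sum_congr rfl fun j _ => ?_
    rw [hterm j]; ring
  have hK : ∑ j ∈ Finset.range (n + 1), k j = 1 := by
    rw [← h1] at h2'
    have e1 : 1 ≤ 2 ^ (n + 1) := Nat.one_le_two_pow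
    have e2 : 2 ^ (n + 2) = 2 * 2 ^ (n + 1) := by ring
    omega
  have hbound : ∑ j ∈ Finset.range (n + 1), k j * (2 ^ j - 1) ≤
      ∑ j ∈ Finset.range (n + 1), k j * (2 ^ n - 1) := by
    refine Finset.sum_le_sum fun j hj => ?_
    have : 2 ^ j ≤ 2 ^ n := Nat.pow_le_pow_right (by norm_num)
      (Nat.lt_succ_iff.mp (Finset.mem_range.mp hj))
    exact Nat.mul_le_mul_left _ (by omega)
  rw [← Finset.sum_mul, hK, one_mul, ← h1] at hbound
  have e1 : 1 ≤ 2 ^ n := Nat.one_le_two_pow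
  have e2 : 2 ^ (n + 1) = 2 * 2 ^ n := by ring
  omega
end

section
/- Over the semiring ℕ, the submodule (i.e., sub-commutative-monoid closed under ℕ-scaling) of ℕ^ℕ generated by the shifts of the sequence g(n) = 2ⁿ − 1 is not finitely generated: for every finite set of shifts σ^{j}(g) (j ∈ J, with σ the shift operator), the sequence σ^{max(J)+1}(g) is not an ℕ-linear combination of them. -/
private lemma key_lemma (g : ℕ → ℕ) (hg : ∀ n, g n = 2 ^ n - 1) (J : Finset ℕ) (m : ℕ)
    (hm1 : 1 ≤ m) (hm : ∀ j ∈ J, j < m) :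
    (fun n : ℕ => g (n + m)) ∉
      Submodule.span ℕ ((fun j : ℕ => fun n : ℕ => g (n + j)) '' (J : Set ℕ)) := by
  intro h
  rw [Finsupp.mem_span_image_iff_linearCombination] at h
  obtain ⟨l, hl, heq⟩ := h
  rw [Finsupp.mem_supported] at hl
  have E : ∀ n, ∑ j ∈ l.support, l j * g (n + j) = g (n + m) := by
    intro n
    have := congrFun heq n
    simpa [Finsupp.linearCombination_apply, Finsupp.sum, Finset.sum_apply] using this
  set T := ∑ j ∈ l.support, l j with hT
  have hS : ∀ n, ∑ j ∈ l.support, l j * 2 ^ (n + j) = (2 ^ (n + m) - 1) + T := by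
    intro n
    have : ∑ j ∈ l.support, l j * 2 ^ (n + j)
        = ∑ j ∈ l.support, (l j * (2 ^ (n + j) - 1) + l j) := by
      apply Finset.sum_congr rfl
      intro j _
      have h1 : 1 ≤ 2 ^ (n + j) := Nat.one_le_two_pow
      rw [← Nat.mul_succ, Nat.succ_eq_add_one, Nat.sub_add_cancel h1]
    rw [this, Finset.sum_add_distrib]
    have := E n
    simp only [hg] at this ⊢
    rw [this]
  have hS0 := hS 0
  have hS1 := hS 1
  simp only [Nat.zero_add] at hS0
  have hdouble : ∑ j ∈ l.support, l j * 2 ^ (1 + j) = 2 * ∑ j ∈ l.support, l j * 2 ^ j := by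
    rw [Finset.mul_sum]
    apply Finset.sum_congr rfl
    intro j _
    ring
  rw [hdouble] at hS1
  have hp1 : (2 : ℕ) ^ (1 + m) = 2 * 2 ^ m := by rw [pow_add]; ring
  have hpos : 1 ≤ 2 ^ m := Nat.one_le_two_pow
  have hTval : T = 1 := by omega
  have hbound : ∑ j ∈ l.support, l j * 2 ^ j ≤ ∑ j ∈ l.support, l j * 2 ^ (m - 1) := by
    apply Finset.sum_le_sum
    intro j hj
    exact Nat.mul_le_mul_left _ (Nat.pow_le_pow_right (by norm_num)
      (by have := hm j (hl hj); omega))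
  rw [← Finset.sum_mul, ← hT, hTval, one_mul] at hbound
  have hm2 : (2 : ℕ) ^ m = 2 * 2 ^ (m - 1) := by
    conv_lhs => rw [show m = (m - 1) + 1 by omega]
    rw [pow_succ]; ring
  have hpos2 : 1 ≤ 2 ^ (m - 1) := Nat.one_le_two_pow
  omega

theorem stmt_15 (g : ℕ → ℕ) (hg : ∀ n, g n = 2 ^ n - 1) :
    ¬ (Submodule.span ℕ (Set.range fun j : ℕ => fun n : ℕ => g (n + j))).FG ∧
      ∀ (J : Finset ℕ) (hJ : J.Nonempty),
        (fun n : ℕ => g (n + (J.max' hJ + 1))) ∉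
          Submodule.span ℕ ((fun j : ℕ => fun n : ℕ => g (n + j)) '' (J : Set ℕ)) := by
  set v : ℕ → ℕ → ℕ := fun j : ℕ => fun n : ℕ => g (n + j) with hv
  have part2 : ∀ (J : Finset ℕ) (hJ : J.Nonempty),
      (fun n : ℕ => g (n + (J.max' hJ + 1))) ∉
        Submodule.span ℕ (v '' (J : Set ℕ)) := by
    intro J hJ
    exact key_lemma g hg J (J.max' hJ + 1) (by omega)
      (fun j hj => by have := Finset.le_max' J j hj; omega)
  refine ⟨?_, part2⟩
  rintro ⟨T, hT⟩
  have hmem : ∀ t ∈ T, ∃ l : ℕ →₀ ℕ, Finsupp.linearCombination ℕ v l = t := by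
    intro t ht
    have : t ∈ Submodule.span ℕ (Set.range v) := hT ▸ Submodule.subset_span ht
    rwa [← Finsupp.range_linearCombination, LinearMap.mem_range] at this
  choose c hc using hmem
  classical
  set J : Finset ℕ := insert 0 (T.attach.sup (fun t => (c t.1 t.2).support)) with hJdef
  have hJne : J.Nonempty := ⟨0, by simp [hJdef]⟩
  have hle : Submodule.span ℕ (Set.range v) ≤ Submodule.span ℕ (v '' (J : Set ℕ)) := by
    rw [← hT]
    rw [Submodule.span_le]
    intro t ht
    rw [SetLike.mem_coe, Finsupp.mem_span_image_iff_linearCombination]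
    refine ⟨c t ht, ?_, hc t ht⟩
    rw [Finsupp.mem_supported]
    intro j hj
    simp only [hJdef, Finset.coe_insert, Set.mem_insert_iff, Finset.mem_coe]
    right
    exact Finset.mem_sup.mpr ⟨⟨t, ht⟩, T.mem_attach _, hj⟩
  have hv_mem : v (J.max' hJne + 1) ∈ Submodule.span ℕ (Set.range v) :=
    Submodule.subset_span ⟨J.max' hJne + 1, rfl⟩
  exact part2 J hJne (hle hv_mem)
end

section
/- Let g : ℕ → ℕ be g(n) = 2ⁿ − 1. For any finite J ⊆ ℕ with max n and coefficients k_j ∈ ℕ (j ∈ J), if Σ_{j∈J} k_j · g(j + m) = g(n + 1 + m) holds for m = 0 and some m ≥ 1, then there exists j₁ ∈ J with k_{j₁} = 1, k_j = 0 for j ≠ j₁, and g(j₁) = g(n+1) — contradicting injectivity of g since j₁ ≤ n < n+1. Hence no such coefficients exist. -/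
theorem stmt_17 (g : ℕ → ℕ) (hg : ∀ n, g n = 2 ^ n - 1)
    (J : Finset ℕ) (hJ : J.Nonempty) (n : ℕ) (hn : J.max' hJ = n) :
    (∀ (k : ℕ → ℕ) (m : ℕ), 1 ≤ m →
        (∑ j ∈ J, k j * g j = g (n + 1)) →
        (∑ j ∈ J, k j * g (j + m) = g (n + 1 + m)) →
        ∃ j₁ ∈ J, k j₁ = 1 ∧ (∀ j ∈ J, j ≠ j₁ → k j = 0) ∧ g j₁ = g (n + 1)) ∧
    ¬ ∃ (k : ℕ → ℕ) (m : ℕ), 1 ≤ m ∧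
        (∑ j ∈ J, k j * g j = g (n + 1)) ∧
        (∑ j ∈ J, k j * g (j + m) = g (n + 1 + m)) := by
  have key : ∀ (k : ℕ → ℕ) (m : ℕ), 1 ≤ m →
      (∑ j ∈ J, k j * g j = g (n + 1)) →
      (∑ j ∈ J, k j * g (j + m) = g (n + 1 + m)) →
      ∃ j₁ ∈ J, k j₁ = 1 ∧ (∀ j ∈ J, j ≠ j₁ → k j = 0) ∧ g j₁ = g (n + 1) := by
    intro k m hm h1 h2
    have hpow : ∀ a : ℕ, ((2 ^ a - 1 : ℕ) : ℤ) = 2 ^ a - 1 := by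
      intro a
      have : (1 : ℕ) ≤ 2 ^ a := Nat.one_le_two_pow
      push_cast [this]
      ring
    have e1 : (∑ j ∈ J, (k j : ℤ) * (2 ^ j - 1)) = 2 ^ (n + 1) - 1 := by
      have h1' := h1
      simp only [hg] at h1'
      have := congrArg (Nat.cast : ℕ → ℤ) h1'
      push_cast at this
      rw [hpow] at this
      rw [← this]
      apply Finset.sum_congr rfl
      intro j _
      rw [hpow]
    have e2 : (∑ j ∈ J, (k j : ℤ) * (2 ^ (j + m) - 1)) = 2 ^ (n + 1 + m) - 1 := by
      have h2' := h2
      simp only [hg] at h2'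
      have := congrArg (Nat.cast : ℕ → ℤ) h2'
      push_cast at this
      rw [hpow] at this
      rw [← this]
      apply Finset.sum_congr rfl
      intro j _
      rw [hpow]
    -- derive (∑ k) * (2^m - 1) = 2^m - 1
    have hsum : (∑ j ∈ J, (k j : ℤ)) * (2 ^ m - 1) = 2 ^ m - 1 := by
      have h3 : (∑ j ∈ J, (k j : ℤ) * (2 ^ (j + m) - 1))
          - 2 ^ m * (∑ j ∈ J, (k j : ℤ) * (2 ^ j - 1))
          = (∑ j ∈ J, (k j : ℤ)) * (2 ^ m - 1) := by
        rw [Finset.mul_sum, ← Finset.sum_sub_distrib, Finset.sum_mul]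
        apply Finset.sum_congr rfl
        intro j _
        rw [pow_add]
        ring
      rw [e1, e2] at h3
      rw [← h3, pow_add]
      ring
    have hne : (2 : ℤ) ^ m - 1 ≠ 0 := by
      have : (2 : ℤ) ^ 1 ≤ 2 ^ m := pow_le_pow_right₀ (by norm_num) hm
      simp at this
      omega
    have hsum1 : (∑ j ∈ J, (k j : ℤ)) = 1 := by
      have h1m : (1 : ℤ) * (2 ^ m - 1) = 2 ^ m - 1 := one_mul _
      exact mul_right_cancel₀ hne (hsum.trans h1m.symm)
    have hsumN : (∑ j ∈ J, k j) = 1 := by exact_mod_cast hsum1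
    -- extract j₁
    obtain ⟨j₁, hj₁J, hj₁ne⟩ : ∃ j₁ ∈ J, k j₁ ≠ 0 := by
      by_contra h
      push_neg at h
      have : (∑ j ∈ J, k j) = 0 := Finset.sum_eq_zero h
      omega
    have herase : k j₁ + ∑ j ∈ J.erase j₁, k j = 1 := by
      rw [← Finset.add_sum_erase J k hj₁J] at hsumN
      exact hsumN
    have hk1 : k j₁ = 1 := by
      have h0 : ∑ j ∈ J.erase j₁, k j ≥ 0 := Nat.zero_le _
      omega
    have hzero : ∀ j ∈ J, j ≠ j₁ → k j = 0 := by
      intro j hj hne'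
      have hj' : j ∈ J.erase j₁ := Finset.mem_erase.mpr ⟨hne', hj⟩
      have hsum0 : ∑ j ∈ J.erase j₁, k j = 0 := by omega
      exact Finset.sum_eq_zero_iff.mp hsum0 j hj'
    refine ⟨j₁, hj₁J, hk1, hzero, ?_⟩
    have : ∑ j ∈ J, k j * g j = k j₁ * g j₁ := by
      apply Finset.sum_eq_single_of_mem j₁ hj₁J
      intro j hj hne'
      rw [hzero j hj hne', zero_mul]
    rw [this, hk1, one_mul] at h1
    exact h1
  refine ⟨key, ?_⟩
  rintro ⟨k, m, hm, h1, h2⟩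
  obtain ⟨j₁, hj₁J, -, -, hgj⟩ := key k m hm h1 h2
  have hle : j₁ ≤ n := hn ▸ J.le_max' j₁ hj₁J
  rw [hg, hg] at hgj
  have h1le : (1 : ℕ) ≤ 2 ^ j₁ := Nat.one_le_two_pow
  have h2le : (1 : ℕ) ≤ 2 ^ (n + 1) := Nat.one_le_two_pow
  have hpow : 2 ^ j₁ = 2 ^ (n + 1) := by omega
  have := Nat.pow_right_injective (le_refl 2) hpow
  omega
end
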